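/- arXiv:2601.06392 — 3 statements merged into one kernel-verified Lean document; each statement's English description precedes it below -/
import Mathlib

section
/- Let H be a real inner product space and let x, x̃ ∈ H with x ≠ 0. Set ε := ‖x − x̃‖ and ρ := ε / ‖x‖, and assume ρ < 1. Then x̃ ≠ 0, and the normalized vectors x̂ := x/‖x‖ and x̃̂ := x̃/‖x̃‖ satisfy the fidelity lower bound ⟨x̂, x̃̂⟩² ≥ ((1 − ρ)/(1 + ρ))². -/
open RealInnerProductSpace

/-- Fidelity lower bound for normalized vectors: if `x ≠ 0` and the relative
approximation error `ρ = ‖x - xt‖ / ‖x‖` satisfies `ρ < 1`, then `xt ≠ 0` and the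
squared inner product of the normalized vectors is at least `((1 - ρ)/(1 + ρ))²`. -/
theorem fidelity_bound {H : Type*} [NormedAddCommGroup H] [InnerProductSpace ℝ H]
    (x xt : H) (hx : x ≠ 0) (ε ρ : ℝ) (hε : ε = ‖x - xt‖) (hρ : ρ = ε / ‖x‖)
    (hρlt : ρ < 1) :
    xt ≠ 0 ∧ ⟪(‖x‖)⁻¹ • x, (‖xt‖)⁻¹ • xt⟫ ^ 2 ≥ ((1 - ρ) / (1 + ρ)) ^ 2 := by
  set a := ‖x‖ with ha
  have hapos : 0 < a := norm_pos_iff.mpr hx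
  have hεnn : 0 ≤ ε := hε ▸ norm_nonneg _
  have hεlt : ε < a := by
    have := (div_lt_one hapos).mp (hρ ▸ hρlt)
    linarith
  -- ‖xt‖ ≥ a - ε
  have hb_lb : a - ε ≤ ‖xt‖ := by
    have h := norm_sub_norm_le x xt
    rw [← hε] at h
    linarith
  have hbpos : 0 < ‖xt‖ := by linarith
  have hxt : xt ≠ 0 := norm_pos_iff.mp hbpos
  set b := ‖xt‖ with hb
  have hb_ub : b ≤ a + ε := by
    have : ‖xt‖ ≤ ‖x‖ + ‖x - xt‖ := by
      calc ‖xt‖ = ‖x - (x - xt)‖ := by rw [sub_sub_cancel]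
        _ ≤ ‖x‖ + ‖x - xt‖ := norm_sub_le _ _
    rw [← hε] at this; linarith
  -- inner product lower bound
  have hinner : a * (a - ε) ≤ ⟪x, xt⟫ := by
    have h1 : ⟪x, x - xt⟫ ≤ a * ε := by
      calc ⟪x, x - xt⟫ ≤ ‖x‖ * ‖x - xt‖ := real_inner_le_norm _ _
        _ = a * ε := by rw [← hε]
    have h2 : ⟪x, xt⟫ = ⟪x, x⟫ - ⟪x, x - xt⟫ := by
      rw [inner_sub_right]; ring
    rw [h2, real_inner_self_eq_norm_mul_norm]
    nlinarith
  refine ⟨hxt, ?_⟩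
  have hsmul : ⟪(a)⁻¹ • x, (b)⁻¹ • xt⟫ = a⁻¹ * (b⁻¹ * ⟪x, xt⟫) := by
    rw [real_inner_smul_left, real_inner_smul_right]
  rw [hsmul]
  have hρval : (1 - ρ) / (1 + ρ) = (a - ε) / (a + ε) := by
    rw [hρ]
    field_simp
  rw [hρval]
  have hbase : (a - ε) / (a + ε) ≤ a⁻¹ * (b⁻¹ * ⟪x, xt⟫) := by
    rw [div_le_iff₀ (by linarith)]
    have heq : a⁻¹ * (b⁻¹ * ⟪x, xt⟫) * (a + ε) = ⟪x, xt⟫ * (a + ε) / (a * b) := by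
      field_simp
    rw [heq, le_div_iff₀ (by positivity)]
    nlinarith [mul_le_mul_of_nonneg_right hinner (by linarith : (0:ℝ) ≤ a + ε),
      mul_le_mul_of_nonneg_left hb_ub (mul_nonneg hapos.le (by linarith : (0:ℝ) ≤ a - ε))]
  have hnn : 0 ≤ (a - ε) / (a + ε) := by
    apply div_nonneg <;> linarith
  exact pow_le_pow_left₀ hnn hbase 2
end

section
/- Let U ≥ 1 be a natural number, E := EuclideanSpace ℝ (Fin U), M a positive integer, and λ ≥ 0. Let ℓ : E → ℝ be Lipschitz with constant L ≥ 0. For each task m = 1, …, M, let (Ω_m, μ_m) be a probability space, α_m ∈ [0, 1], δ_m ≥ 0, and z_m, Δ_m : Ω_m → E measurable with |z_m(ω)ᵢ| ≤ 1 for every coordinate i and every ω, and ‖Δ_m(ω)‖ ≤ δ_m for every ω. Further, let (A, ν) be a probability space and c, c^𝒩, s : A → ℝ measurable with c, c^𝒩 valued in [0, 1], |s| ≤ C_π with C_π ≥ 0, and |c^𝒩(a) − ᾱ c(a)| ≤ ε_c for all a, where ᾱ ∈ [0, 1] and ε_c ≥ 0. Then, setting C_m := L √U, |Σ_{m=1}^{M}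 (∫ ℓ(α_m • z_m + Δ_m) dμ_m − ∫ ℓ(z_m) dμ_m) + λ (∫ c^𝒩 s dν − ∫ c s dν)| ≤ Σ_{m=1}^{M} C_m ((1 − α_m) + δ_m) + λ C_π ((1 − ᾱ) + ε_c). -/
open MeasureTheory

/-- If two bounded measurable real functions differ pointwise by at most `C`, their
integrals against a probability measure differ by at most `C`. -/
lemma abs_integral_sub_le_of_bdd {A : Type*} [MeasurableSpace A] (μ : Measure A)
    [IsProbabilityMeasure μ] (f g : A → ℝ)
    (hf : AEStronglyMeasurable f μ) (hg : AEStronglyMeasurable g μ)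
    (Bf Bg C : ℝ) (hbf : ∀ a, |f a| ≤ Bf) (hbg : ∀ a, |g a| ≤ Bg)
    (h : ∀ a, |f a - g a| ≤ C) :
    |(∫ a, f a ∂μ) - ∫ a, g a ∂μ| ≤ C := by
  have hif : Integrable f μ :=
    ⟨hf, HasFiniteIntegral.of_bounded (C := Bf) (Filter.Eventually.of_forall hbf)⟩
  have hig : Integrable g μ :=
    ⟨hg, HasFiniteIntegral.of_bounded (C := Bg) (Filter.Eventually.of_forall hbg)⟩
  rw [← integral_sub hif hig, ← Real.norm_eq_abs]
  calc ‖∫ a, (f a - g a) ∂μ‖ ≤ C * (μ Set.univ).toReal :=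
        norm_integral_le_of_norm_le_const
          (Filter.Eventually.of_forall fun a => by simpa using h a)
    _ = C := by simp

/-- Objective-level robustness of CL-QAS: combining per-task classifier robustness over
`M` tasks with policy-term robustness, with `C_m = L√U`,
`|ℒ𝒩_cl-qas − ℒ_cl-qas| ≤ Σ_m C_m((1 − α_m) + δ_m) + λ C_π((1 − ᾱ) + ε_c)`. -/
theorem objective_level_robustness (U : ℕ) (hU : 1 ≤ U) (M : ℕ) (hM : 0 < M)
    (lam : ℝ) (hlam : 0 ≤ lam) (L : ℝ) (hL : 0 ≤ L)
    (ℓ : EuclideanSpace ℝ (Fin U) → ℝ)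
    (hlip : ∀ x y : EuclideanSpace ℝ (Fin U), |ℓ x - ℓ y| ≤ L * ‖x - y‖)
    -- per-task data
    {Ω : Fin M → Type*} [∀ m, MeasurableSpace (Ω m)]
    (μ : ∀ m, Measure (Ω m)) [∀ m, IsProbabilityMeasure (μ m)]
    (α : Fin M → ℝ) (hα : ∀ m, α m ∈ Set.Icc (0 : ℝ) 1)
    (δ : Fin M → ℝ) (hδ : ∀ m, 0 ≤ δ m)
    (z Δ : ∀ m, Ω m → EuclideanSpace ℝ (Fin U))
    (hzm : ∀ m, Measurable (z m)) (hΔm : ∀ m, Measurable (Δ m))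
    (hz : ∀ m ω i, |z m ω i| ≤ 1) (hΔ : ∀ m ω, ‖Δ m ω‖ ≤ δ m)
    -- policy side
    {A : Type*} [MeasurableSpace A] (ν : Measure A) [IsProbabilityMeasure ν]
    (c cN s : A → ℝ) (hcm : Measurable c) (hcNm : Measurable cN) (hsm : Measurable s)
    (hc : ∀ a, c a ∈ Set.Icc (0 : ℝ) 1) (hcN : ∀ a, cN a ∈ Set.Icc (0 : ℝ) 1)
    (Cπ : ℝ) (hCπ : 0 ≤ Cπ) (hs : ∀ a, |s a| ≤ Cπ)
    (αbar εc : ℝ) (hαbar : αbar ∈ Set.Icc (0 : ℝ) 1) (hεc : 0 ≤ εc)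
    (hcontr : ∀ a, |cN a - αbar * c a| ≤ εc)
    (Cm : Fin M → ℝ) (hCm : ∀ m, Cm m = L * Real.sqrt U) :
    |(∑ m : Fin M, ((∫ ω, ℓ (α m • z m ω + Δ m ω) ∂μ m) - ∫ ω, ℓ (z m ω) ∂μ m)) +
        lam * ((∫ a, cN a * s a ∂ν) - ∫ a, c a * s a ∂ν)| ≤
      (∑ m : Fin M, Cm m * ((1 - α m) + δ m)) + lam * Cπ * ((1 - αbar) + εc) := by
  have hsqrt : (1 : ℝ) ≤ Real.sqrt U := by
    rw [show (1:ℝ) = Real.sqrt 1 by simp]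
    exact Real.sqrt_le_sqrt (by exact_mod_cast hU)
  have hsqrt0 : (0 : ℝ) ≤ Real.sqrt U := Real.sqrt_nonneg _
  -- continuity of ℓ
  have hcont : Continuous ℓ := by
    have : LipschitzWith (Real.toNNReal L) ℓ := by
      apply LipschitzWith.of_dist_le_mul
      intro x y
      calc dist (ℓ x) (ℓ y) = |ℓ x - ℓ y| := Real.dist_eq _ _
        _ ≤ L * ‖x - y‖ := hlip x y
        _ ≤ (Real.toNNReal L : ℝ) * dist x y := by
            rw [dist_eq_norm]
            exact mul_le_mul_of_nonneg_right (Real.le_coe_toNNReal L) (norm_nonneg _)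
    exact this.continuous
  -- norm bound on z
  have hnz : ∀ m ω, ‖z m ω‖ ≤ Real.sqrt U := by
    intro m ω
    rw [EuclideanSpace.norm_eq]
    apply Real.sqrt_le_sqrt
    calc ∑ i, ‖z m ω i‖ ^ 2 ≤ ∑ _i : Fin U, (1 : ℝ) := by
          apply Finset.sum_le_sum
          intro i _
          have := hz m ω i
          rw [Real.norm_eq_abs]
          nlinarith [abs_nonneg (z m ω i)]
      _ = U := by simp
  -- per-task bound
  have htask : ∀ m : Fin M,
      |(∫ ω, ℓ (α m • z m ω + Δ m ω) ∂μ m) - ∫ ω, ℓ (z m ω) ∂μ m| ≤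
        Cm m * ((1 - α m) + δ m) := by
    intro m
    obtain ⟨hα0, hα1⟩ := hα m
    apply abs_integral_sub_le_of_bdd (μ m) _ _
      ((hcont.measurable.comp ((hzm m).const_smul (α m) |>.add (hΔm m))).aestronglyMeasurable)
      ((hcont.measurable.comp (hzm m)).aestronglyMeasurable)
      (|ℓ 0| + L * (Real.sqrt U + δ m)) (|ℓ 0| + L * Real.sqrt U)
    · intro ω
      simp only [Function.comp_apply, Pi.smul_apply, Pi.add_apply]
      have h1 : |ℓ (α m • z m ω + Δ m ω) - ℓ 0| ≤ L * ‖α m • z m ω + Δ m ω‖ := by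
        simpa using hlip (α m • z m ω + Δ m ω) 0
      have h2 : ‖α m • z m ω + Δ m ω‖ ≤ Real.sqrt U + δ m := by
        calc ‖α m • z m ω + Δ m ω‖ ≤ ‖α m • z m ω‖ + ‖Δ m ω‖ := norm_add_le _ _
          _ ≤ Real.sqrt U + δ m := by
              rw [norm_smul, Real.norm_eq_abs, abs_of_nonneg hα0]
              have := hnz m ω
              have := hΔ m ω
              nlinarith [norm_nonneg (z m ω)]
      have := abs_sub_abs_le_abs_sub (ℓ (α m • z m ω + Δ m ω)) (ℓ 0)
      nlinarith [abs_abs (ℓ 0), abs_nonneg (ℓ 0)]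
    · intro ω
      simp only [Function.comp_apply]
      have h1 : |ℓ (z m ω) - ℓ 0| ≤ L * ‖z m ω‖ := by simpa using hlip (z m ω) 0
      have h2 := hnz m ω
      have := abs_sub_abs_le_abs_sub (ℓ (z m ω)) (ℓ 0)
      nlinarith [norm_nonneg (z m ω)]
    · intro ω
      have h1 := hlip (α m • z m ω + Δ m ω) (z m ω)
      have h2 : ‖α m • z m ω + Δ m ω - z m ω‖ ≤ (1 - α m) * Real.sqrt U + δ m := by
        have heq : α m • z m ω + Δ m ω - z m ω = (α m - 1) • z m ω + Δ m ω := by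
          module
        rw [heq]
        calc ‖(α m - 1) • z m ω + Δ m ω‖ ≤ ‖(α m - 1) • z m ω‖ + ‖Δ m ω‖ :=
              norm_add_le _ _
          _ ≤ (1 - α m) * Real.sqrt U + δ m := by
              rw [norm_smul, Real.norm_eq_abs, abs_of_nonpos (by linarith),
                neg_sub]
              have := hnz m ω
              have := hΔ m ω
              nlinarith [norm_nonneg (z m ω)]
      rw [hCm m]
      calc |ℓ (α m • z m ω + Δ m ω) - ℓ (z m ω)| ≤ L * ‖α m • z m ω + Δ m ω - z m ω‖ :=
            h1
        _ ≤ L * ((1 - α m) * Real.sqrt U + δ m) := by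
            exact mul_le_mul_of_nonneg_left h2 hL
        _ ≤ L * Real.sqrt U * ((1 - α m) + δ m) := by
            nlinarith [mul_nonneg (mul_nonneg hL (hδ m)) (sub_nonneg.mpr hsqrt)]
  -- policy bound
  obtain ⟨hαb0, hαb1⟩ := hαbar
  have hpol : |(∫ a, cN a * s a ∂ν) - ∫ a, c a * s a ∂ν| ≤ Cπ * ((1 - αbar) + εc) := by
    apply abs_integral_sub_le_of_bdd ν _ _
      ((hcNm.mul hsm).aestronglyMeasurable) ((hcm.mul hsm).aestronglyMeasurable)
      Cπ Cπ
    · intro a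
      rw [Pi.mul_apply, abs_mul]
      obtain ⟨h0, h1⟩ := hcN a
      have := hs a
      have : |cN a| ≤ 1 := abs_le.mpr ⟨by linarith, h1⟩
      nlinarith [abs_nonneg (cN a), abs_nonneg (s a)]
    · intro a
      rw [Pi.mul_apply, abs_mul]
      obtain ⟨h0, h1⟩ := hc a
      have := hs a
      have : |c a| ≤ 1 := abs_le.mpr ⟨by linarith, h1⟩
      nlinarith [abs_nonneg (c a), abs_nonneg (s a)]
    · intro a
      have hdiff : |cN a - c a| ≤ (1 - αbar) + εc := by
        have h1 := hcontr a
        obtain ⟨h0, h2⟩ := hc a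
        have h3 : |αbar * c a - c a| ≤ 1 - αbar := by
          rw [show αbar * c a - c a = (αbar - 1) * c a by ring, abs_mul,
            abs_of_nonpos (by linarith : αbar - 1 ≤ 0), abs_of_nonneg h0]
          nlinarith
        calc |cN a - c a| = |(cN a - αbar * c a) + (αbar * c a - c a)| := by ring_nf
          _ ≤ |cN a - αbar * c a| + |αbar * c a - c a| := abs_add_le _ _
          _ ≤ (1 - αbar) + εc := by linarith
      calc |cN a * s a - c a * s a| = |cN a - c a| * |s a| := by
            rw [← abs_mul]; ring_nf
        _ ≤ Cπ * ((1 - αbar) + εc) := by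
            have := hs a
            nlinarith [abs_nonneg (cN a - c a), abs_nonneg (s a)]
  -- combine
  calc |(∑ m : Fin M, ((∫ ω, ℓ (α m • z m ω + Δ m ω) ∂μ m) - ∫ ω, ℓ (z m ω) ∂μ m)) +
        lam * ((∫ a, cN a * s a ∂ν) - ∫ a, c a * s a ∂ν)|
      ≤ |∑ m : Fin M, ((∫ ω, ℓ (α m • z m ω + Δ m ω) ∂μ m) - ∫ ω, ℓ (z m ω) ∂μ m)| +
        |lam * ((∫ a, cN a * s a ∂ν) - ∫ a, c a * s a ∂ν)| := abs_add_le _ _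
    _ ≤ (∑ m : Fin M, Cm m * ((1 - α m) + δ m)) + lam * Cπ * ((1 - αbar) + εc) := by
        have hA : |∑ m : Fin M, ((∫ ω, ℓ (α m • z m ω + Δ m ω) ∂μ m) -
            ∫ ω, ℓ (z m ω) ∂μ m)| ≤ ∑ m : Fin M, Cm m * ((1 - α m) + δ m) := by
          refine (Finset.abs_sum_le_sum_abs _ _).trans ?_
          exact Finset.sum_le_sum fun m _ => htask m
        have hB : |lam * ((∫ a, cN a * s a ∂ν) - ∫ a, c a * s a ∂ν)| ≤
            lam * (Cπ * ((1 - αbar) + εc)) := by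
          rw [abs_mul, abs_of_nonneg hlam]
          exact mul_le_mul_of_nonneg_left hpol hlam
        nlinarith
end

section
/- Let A be a real m × n matrix, let H be the fact that AᵀA is symmetric (Hermitian over ℝ), and let μ : Fin n → ℝ denote the eigenvalues of AᵀA. Then for every natural number k there exist a matrix B : Matrix (Fin m) (Fin n) ℝ with rank B ≤ k and a finite set t ⊆ Fin n with card t = n − min k n such that μ(i) ≤ μ(j) for all i ∈ t and j ∉ t, and trace((A − B)ᵀ (A − B)) ≤ Σ_{i ∈ t} μ(i). -/
open Matrix

/-- Singular-value truncation step of TT-SVD: for a real `m × n` matrix `A` with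
`hH : (Aᵀ * A).IsHermitian` and eigenvalues `μ = hH.eigenvalues`, for every `k` there
exist a matrix `B` of rank at most `k` and a set `t` of `n - min k n` indices carrying
the smallest eigenvalues of `AᵀA`, such that
`trace ((A - B)ᵀ * (A - B)) ≤ Σ_{i ∈ t} μ i`. -/
theorem svd_truncation_error (m n : ℕ) (A : Matrix (Fin m) (Fin n) ℝ)
    (hH : (Aᵀ * A).IsHermitian) :
    ∀ k : ℕ, ∃ (B : Matrix (Fin m) (Fin n) ℝ) (t : Finset (Fin n)),
      B.rank ≤ k ∧ t.card = n - min k n ∧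
      (∀ i ∈ t, ∀ j ∉ t, hH.eigenvalues i ≤ hH.eigenvalues j) ∧
      ((A - B)ᵀ * (A - B)).trace ≤ ∑ i ∈ t, hH.eigenvalues i := by
  intro k
  classical
  set μ := hH.eigenvalues with hμ
  set σ := Tuple.sort μ with hσ
  set c := n - min k n with hc
  have hcn : c ≤ n := Nat.sub_le _ _
  set s : Finset (Fin n) := Finset.univ.filter (fun a : Fin n => (a : ℕ) < c) with hs
  set t : Finset (Fin n) := s.image σ with ht
  have hscard : s.card = c := by
    rw [show c = (Finset.range c).card from (Finset.card_range c).symm]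
    refine Finset.card_bij (fun a _ => (a : ℕ)) ?_ ?_ ?_
    · intro a ha
      simp only [hs, Finset.mem_filter, Finset.mem_univ, true_and] at ha
      simpa using ha
    · intro a _ b _ h; exact Fin.val_injective h
    · intro b hb
      simp only [Finset.mem_range] at hb
      exact ⟨⟨b, lt_of_lt_of_le hb hcn⟩, by simp [hs, hb], rfl⟩
  have htcard : t.card = c := by
    rw [ht, Finset.card_image_of_injective _ σ.injective, hscard]
  have hmem : ∀ j : Fin n, j ∈ t ↔ ((σ.symm j : Fin n) : ℕ) < c := by
    intro j
    simp only [ht, Finset.mem_image, hs, Finset.mem_filter, Finset.mem_univ, true_and]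
    constructor
    · rintro ⟨a, ha, rfl⟩; simpa using ha
    · intro h; exact ⟨σ.symm j, h, σ.apply_symm_apply j⟩
  have horder : ∀ i ∈ t, ∀ j ∉ t, μ i ≤ μ j := by
    intro i hi j hj
    rw [hmem] at hi hj
    have hle : σ.symm i ≤ σ.symm j := by
      have := le_of_not_gt hj
      exact Fin.le_def.mpr (le_trans (le_of_lt hi) this)
    have := Tuple.monotone_sort μ hle
    simpa [Function.comp, ← hσ, σ.apply_symm_apply] using this
  -- matrices
  set U : Matrix (Fin n) (Fin n) ℝ := (hH.eigenvectorUnitary : Matrix (Fin n) (Fin n) ℝ) with hUdef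
  have hstarU : star U = Uᵀ := by
    rw [Matrix.star_eq_conjTranspose, conjTranspose_eq_transpose_of_trivial]
  have hU1 : Uᵀ * U = 1 := by
    rw [← hstarU]; exact Unitary.coe_star_mul_self hH.eigenvectorUnitary
  have hU2 : U * Uᵀ = 1 := by
    rw [← hstarU]; exact Unitary.coe_mul_star_self hH.eigenvectorUnitary
  have hspec : Aᵀ * A = U * diagonal μ * Uᵀ := by
    have := hH.spectral_theorem
    rw [Unitary.conjStarAlgAut_apply] at this
    rw [hstarU] at this
    simpa [RCLike.ofReal_real_eq_id] using this
  set d : Fin n → ℝ := fun i => if i ∈ t then 1 else 0 with hd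
  set e : Fin n → ℝ := fun i => if i ∈ t then 0 else 1 with he
  set B : Matrix (Fin m) (Fin n) ℝ := A * (U * diagonal e * Uᵀ) with hB
  refine ⟨B, t, ?_, by rw [htcard], horder, ?_⟩
  · -- rank
    have h1 : B.rank ≤ (U * diagonal e * Uᵀ).rank := rank_mul_le_right _ _
    have h2 : (U * diagonal e * Uᵀ).rank ≤ (U * diagonal e).rank := rank_mul_le_left _ _
    have h3 : (U * diagonal e).rank ≤ (diagonal e).rank := rank_mul_le_right _ _
    have h4 : (diagonal e).rank = Fintype.card {i // e i ≠ 0} := rank_diagonal e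
    have h5 : Fintype.card {i // e i ≠ 0} = tᶜ.card := by
      rw [Fintype.card_subtype]
      congr 1
      ext i
      simp [he]
    have h6 : tᶜ.card = min k n := by
      rw [Finset.card_compl, htcard, hc, Fintype.card_fin]
      omega
    calc B.rank ≤ (diagonal e).rank := le_trans h1 (le_trans h2 h3)
      _ = min k n := by rw [h4, h5, h6]
      _ ≤ k := min_le_left _ _
  · -- trace
    have hde : diagonal d + diagonal e = 1 := by
      rw [diagonal_add]
      have hde1 : (fun i => d i + e i) = fun _ => (1 : ℝ) := by
        funext i; by_cases hi : i ∈ t <;> simp [hd, he, hi]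
      rw [hde1, diagonal_one]
    have hAB : A - B = A * (U * diagonal d * Uᵀ) := by
      have : U * diagonal d * Uᵀ + U * diagonal e * Uᵀ = 1 := by
        rw [← Matrix.add_mul, ← Matrix.mul_add, hde, Matrix.mul_one, hU2]
      calc A - B = A * (U * diagonal d * Uᵀ + U * diagonal e * Uᵀ) - B := by
            rw [this, Matrix.mul_one]
        _ = A * (U * diagonal d * Uᵀ) := by
            rw [Matrix.mul_add, hB]; abel
    rw [hAB]
    have hQt : (U * diagonal d * Uᵀ)ᵀ = U * diagonal d * Uᵀ := by
      rw [Matrix.transpose_mul, Matrix.transpose_mul, transpose_transpose, diagonal_transpose,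
        Matrix.mul_assoc]
    have key : (A * (U * diagonal d * Uᵀ))ᵀ * (A * (U * diagonal d * Uᵀ))
        = U * (diagonal d * diagonal μ * diagonal d) * Uᵀ := by
      rw [Matrix.transpose_mul, hQt]
      calc (U * diagonal d * Uᵀ) * Aᵀ * (A * (U * diagonal d * Uᵀ))
          = (U * diagonal d * Uᵀ) * (Aᵀ * A) * (U * diagonal d * Uᵀ) := by
            simp only [Matrix.mul_assoc]
        _ = U * (diagonal d * diagonal μ * diagonal d) * Uᵀ := by
            rw [hspec]
            simp only [Matrix.mul_assoc]
            rw [← Matrix.mul_assoc Uᵀ U, hU1, Matrix.one_mul,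
              ← Matrix.mul_assoc Uᵀ U, hU1, Matrix.one_mul]
    rw [key]
    have : (U * (diagonal d * diagonal μ * diagonal d) * Uᵀ).trace
        = (diagonal d * diagonal μ * diagonal d).trace := by
      rw [trace_mul_cycle, ← Matrix.mul_assoc, hU1, Matrix.one_mul]
    rw [this, diagonal_mul_diagonal, diagonal_mul_diagonal, trace_diagonal]
    have : ∀ i : Fin n, d i * μ i * d i = if i ∈ t then μ i else 0 := by
      intro i; by_cases hi : i ∈ t <;> simp [hd, hi]
    rw [Finset.sum_congr rfl fun i _ => this i]
    rw [Finset.sum_ite_mem, Finset.univ_inter]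
end
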